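/- For all m ≥ 0, b(8m+2) is odd and b(8m+6) is even, where b(n) is the number of non-squashing partitions of n into distinct parts. -/

import Mathlib

/-- A partition written as a nondecreasing list of positive parts. -/
def IsPartList (l : List ℕ) : Prop :=
  l.Pairwise (· ≤ ·) ∧ ∀ p ∈ l, 0 < p

/-- A partition with distinct parts, written as a strictly increasing list of positive parts. -/
def DistinctPartList (l : List ℕ) : Prop :=
  l.Pairwise (· < ·) ∧ ∀ p ∈ l, 0 < p

/-- The s-non-squashing condition: (s-1)(p₁+⋯+p_j) ≤ p_{j+1} for 1 ≤ j ≤ k-1. -/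
def NSq (s : ℕ) (l : List ℕ) : Prop :=
  ∀ j, 0 < j → j < l.length → (s - 1) * (l.take j).sum ≤ l.getD j 0

/-- Number of non-squashing partitions of n into distinct parts. -/
noncomputable def b (n : ℕ) : ℕ :=
  {l : List ℕ | DistinctPartList l ∧ NSq 2 l ∧ l.sum = n}.ncard

namespace NSqAux

def S (n : ℕ) : Set (List ℕ) := {l | DistinctPartList l ∧ NSq 2 l ∧ l.sum = n}

lemma b_def (n : ℕ) : b n = (S n).ncard := rfl

lemma mem_S {l : List ℕ} {n : ℕ} :
    l ∈ S n ↔ DistinctPartList l ∧ NSq 2 l ∧ l.sum = n := Iff.rfl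

lemma nsq2_iff {l : List ℕ} :
    NSq 2 l ↔ ∀ j, 0 < j → j < l.length → (l.take j).sum ≤ l.getD j 0 := by
  simp [NSq]

lemma take_concat_of_le {t : List ℕ} {a : ℕ} {j : ℕ} (h : j ≤ t.length) :
    (t ++ [a]).take j = t.take j := by
  rw [List.take_append]
  simp [Nat.sub_eq_zero_of_le h]

lemma getD_concat_lt {t : List ℕ} {a j : ℕ} (h : j < t.length) :
    (t ++ [a]).getD j 0 = t.getD j 0 := by
  simp [List.getD_eq_getElem?_getD, List.getElem?_append_left h]

lemma getD_concat_len {t : List ℕ} {a : ℕ} :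
    (t ++ [a]).getD t.length 0 = a := by
  simp [List.getD_eq_getElem?_getD, List.getElem?_concat_length]

lemma mem_le_sum {l : List ℕ} {x : ℕ} (hx : x ∈ l) : x ≤ l.sum :=
  List.single_le_sum (fun _ _ => Nat.zero_le _) x hx

lemma concat_mem_S {t : List ℕ} {a n : ℕ} :
    t ++ [a] ∈ S n ↔ t ∈ S t.sum ∧ (∀ x ∈ t, x < a) ∧ 0 < a ∧ t.sum ≤ a ∧ t.sum + a = n := by
  constructor
  · rintro ⟨⟨hs, hp⟩, hn, hsum⟩
    have hs' : t.Pairwise (· < ·) ∧ ∀ x ∈ t, x < a := by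
      rw [List.pairwise_append] at hs
      exact ⟨hs.1, fun x hx => by simpa using hs.2.2 x hx⟩
    have hp' : (∀ p ∈ t, 0 < p) ∧ 0 < a := by
      constructor
      · exact fun p hp' => hp p (by simp [hp'])
      · exact hp a (by simp)
    have hnsq : NSq 2 t := by
      rw [nsq2_iff] at hn ⊢
      intro j hj hjl
      have := hn j hj (by simp; omega)
      rwa [take_concat_of_le (le_of_lt hjl), getD_concat_lt hjl] at this
    have hsle : t.sum ≤ a := by
      rcases Nat.eq_zero_or_pos t.length with h0 | h0
      · rw [List.length_eq_zero_iff] at h0; subst h0; simpa using hp'.2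
      · have := (nsq2_iff.mp hn) t.length h0 (by simp)
        rwa [take_concat_of_le le_rfl, List.take_length, getD_concat_len] at this
    refine ⟨⟨⟨hs'.1, hp'.1⟩, hnsq, rfl⟩, hs'.2, hp'.2, hsle, by simpa using hsum⟩
  · rintro ⟨⟨⟨hs, hp⟩, hn, -⟩, hlt, ha, hsle, hsum⟩
    refine ⟨⟨?_, ?_⟩, ?_, by simpa using hsum⟩
    · rw [List.pairwise_append]
      refine ⟨hs, by simp, fun x hx y hy => ?_⟩
      simp at hy
      subst hy
      exact hlt x hx
    · intro p hp'
      rcases List.mem_append.mp hp' with h | h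
      · exact hp p h
      · simp at h; omega
    · rw [nsq2_iff] at hn ⊢
      intro j hj hjl
      simp at hjl
      rcases Nat.lt_or_ge j t.length with h | h
      · rw [take_concat_of_le (le_of_lt h), getD_concat_lt h]
        exact hn j hj h
      · have hje : j = t.length := by omega
        subst hje
        rw [take_concat_of_le le_rfl, List.take_length, getD_concat_len]
        exact hsle

lemma nil_mem_S : ([] : List ℕ) ∈ S 0 := by
  refine ⟨⟨List.Pairwise.nil, by simp⟩, ?_, rfl⟩
  intro j hj hjl
  simp at hjl

lemma S_zero : S 0 = {([] : List ℕ)} := by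
  ext l
  constructor
  · rintro ⟨⟨-, hp⟩, -, hsum⟩
    have : ∀ x ∈ l, x = 0 := List.sum_eq_zero_iff.mp hsum
    rcases l with - | ⟨x, l'⟩
    · rfl
    · exact absurd (this x (by simp)) (by have := hp x (by simp); omega)
  · rintro rfl
    exact nil_mem_S

lemma ne_nil_of_mem_S {l : List ℕ} {n : ℕ} (h : l ∈ S n) (hn : 0 < n) : l ≠ [] := by
  rintro rfl
  rw [mem_S] at h
  simp at h
  omega

lemma exists_concat_of_mem_S {l : List ℕ} {n : ℕ} (h : l ∈ S n) (hn : 0 < n) :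
    ∃ t a, l = t ++ [a] := by
  have hne := ne_nil_of_mem_S h hn
  exact ⟨l.dropLast, l.getLast hne, (List.dropLast_append_getLast hne).symm⟩

lemma eq_singleton_of_sum_mem {t : List ℕ} {x : ℕ} (ht : t ∈ S t.sum) (hx : x ∈ t)
    (hsum : x = t.sum) : t = [x] := by
  have hxpos : 0 < x := ht.1.2 x hx
  have hpos : 0 < t.sum := by omega
  obtain ⟨u, c, rfl⟩ := exists_concat_of_mem_S ht (by omega)
  obtain ⟨hu, hlt, hc, hsle, -⟩ := concat_mem_S.mp ht
  have hsc : (u ++ [c]).sum = u.sum + c := by simp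
  rcases List.mem_append.mp hx with h | h
  · exfalso
    have h1 : x ≤ u.sum := mem_le_sum h
    have h2 : x < c := hlt x h
    omega
  · simp at h
    have husum : u.sum = 0 := by omega
    have hu0 : u ∈ S 0 := by rwa [husum] at hu
    have hnil : u = [] := by
      have := S_zero ▸ hu0
      simpa using this
    subst hnil
    simp
    omega

lemma singleton_mem_S {a : ℕ} (ha : 0 < a) : [a] ∈ S a := by
  have : ([] : List ℕ) ++ [a] ∈ S a := by
    rw [concat_mem_S]
    exact ⟨by simpa using nil_mem_S, by simp, ha, by simp, by simp⟩
  simpa using this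

lemma last_two_le {l : List ℕ} {n : ℕ} (h : l ∈ S n) (hn : 0 < n) :
    n ≤ 2 * l.getLastD 0 := by
  obtain ⟨t, a, rfl⟩ := exists_concat_of_mem_S h hn
  obtain ⟨-, -, -, hsle, hsum⟩ := concat_mem_S.mp h
  rw [List.getLastD_concat]
  omega

lemma S_finite (n : ℕ) : (S n).Finite := by
  apply Set.Finite.subset
    (((Finset.range (n+1)).powerset.finite_toSet).image (fun s : Finset ℕ => s.sort (· ≤ ·)))
  intro l hl
  refine ⟨l.toFinset, ?_, ?_⟩
  · rw [Finset.mem_coe, Finset.mem_powerset]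
    intro x hx
    rw [List.mem_toFinset] at hx
    have h1 := mem_le_sum hx
    rw [hl.2.2] at h1
    exact Finset.mem_range.mpr (by omega)
  · have hnd : l.Nodup := hl.1.1.nodup
    exact (List.toFinset_sort (· ≤ ·) hnd).mpr (hl.1.1.imp le_of_lt)

def incL (l : List ℕ) : List ℕ := l.dropLast ++ [l.getLastD 0 + 1]

lemma incL_concat (t : List ℕ) (a : ℕ) : incL (t ++ [a]) = t ++ [a + 1] := by
  simp [incL, List.dropLast_concat, List.getLastD_concat]

lemma incL_injOn {n : ℕ} (hn : 0 < n) : Set.InjOn incL (S n) := by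
  intro l1 h1 l2 h2 e
  obtain ⟨t1, a1, rfl⟩ := exists_concat_of_mem_S h1 hn
  obtain ⟨t2, a2, rfl⟩ := exists_concat_of_mem_S h2 hn
  rw [incL_concat, incL_concat] at e
  have h1' := congrArg List.dropLast e
  have h2' := congrArg (fun l => List.getLastD l 0) e
  simp only [List.dropLast_concat] at h1'
  simp only [List.getLastD_concat] at h2'
  rw [h1', (by omega : a1 = a2)]

lemma imgA (m : ℕ) :
    incL '' S (2*m+1) = {l ∈ S (2*m+2) | m + 2 ≤ l.getLastD 0} := by
  ext r
  constructor
  · rintro ⟨l, hl, rfl⟩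
    obtain ⟨t, a, rfl⟩ := exists_concat_of_mem_S hl (by omega)
    obtain ⟨ht, hlt, ha, hsle, hsum⟩ := concat_mem_S.mp hl
    rw [incL_concat]
    refine ⟨concat_mem_S.mpr ⟨ht, fun x hx => by have := hlt x hx; omega,
      by omega, by omega, by omega⟩, ?_⟩
    rw [List.getLastD_concat]
    omega
  · rintro ⟨hr, hlast⟩
    obtain ⟨t, a, rfl⟩ := exists_concat_of_mem_S hr (by omega)
    rw [List.getLastD_concat] at hlast
    obtain ⟨ht, hlt, ha, hsle, hsum⟩ := concat_mem_S.mp hr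
    refine ⟨t ++ [a - 1], concat_mem_S.mpr ⟨ht, fun x hx => ?_, by omega, by omega, by omega⟩, ?_⟩
    · have := mem_le_sum hx
      omega
    · rw [incL_concat, (by omega : a - 1 + 1 = a)]

lemma imgOdd (m : ℕ) (hm : 1 ≤ m) :
    incL '' S (2*m) = S (2*m+1) \ {[m, m+1]} := by
  ext r
  constructor
  · rintro ⟨l, hl, rfl⟩
    obtain ⟨t, a, rfl⟩ := exists_concat_of_mem_S hl (by omega)
    obtain ⟨ht, hlt, ha, hsle, hsum⟩ := concat_mem_S.mp hl
    rw [incL_concat]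
    refine ⟨concat_mem_S.mpr ⟨ht, fun x hx => by have := hlt x hx; omega,
      by omega, by omega, by omega⟩, ?_⟩
    intro hmem
    simp only [Set.mem_singleton_iff] at hmem
    rcases t with - | ⟨x, t'⟩
    · simp at hmem
    · rcases t' with - | ⟨y, t''⟩
      · simp at hmem
        have := hlt x (by simp)
        omega
      · have := congrArg List.length hmem
        simp at this
  · rintro ⟨hr, hne⟩
    simp only [Set.mem_singleton_iff] at hne
    obtain ⟨t, a, rfl⟩ := exists_concat_of_mem_S hr (by omega)
    obtain ⟨ht, hlt, ha, hsle, hsum⟩ := concat_mem_S.mp hr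
    have ha2 : m + 1 ≤ a := by omega
    have hkey : ∀ x ∈ t, x < a - 1 := by
      intro x hx
      have hxs : x ≤ t.sum := mem_le_sum hx
      by_contra hcon
      push_neg at hcon
      have hxa : x < a := hlt x hx
      have hxm : x = t.sum := by omega
      have heq := eq_singleton_of_sum_mem ht hx hxm
      apply hne
      rw [heq]
      simp
      omega
    refine ⟨t ++ [a - 1], concat_mem_S.mpr ⟨ht, hkey, by omega, by omega, by omega⟩, ?_⟩
    rw [incL_concat, (by omega : a - 1 + 1 = a)]

lemma imgB (m : ℕ) :
    List.dropLast '' {l ∈ S (2*m+2) | l.getLastD 0 = m+1} = S (m+1) \ {[m+1]} := by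
  ext t
  constructor
  · rintro ⟨l, ⟨hl, hlast⟩, rfl⟩
    obtain ⟨u, a, rfl⟩ := exists_concat_of_mem_S hl (by omega)
    rw [List.getLastD_concat] at hlast
    subst hlast
    obtain ⟨hu, hlt, ha, hsle, hsum⟩ := concat_mem_S.mp hl
    rw [List.dropLast_concat]
    have husum : u.sum = m + 1 := by omega
    constructor
    · rw [← husum]
      exact hu
    · intro hmem
      simp only [Set.mem_singleton_iff] at hmem
      have hmm : (m+1) ∈ u := by rw [hmem]; simp
      exact absurd (hlt _ hmm) (by omega)
  · rintro ⟨ht, hne⟩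
    simp only [Set.mem_singleton_iff] at hne
    have htsum : t.sum = m + 1 := ht.2.2
    have ht' : t ∈ S t.sum := by rw [htsum]; exact ht
    refine ⟨t ++ [m+1], ⟨concat_mem_S.mpr ⟨ht', fun x hx => ?_, by omega, by omega, by omega⟩,
      by rw [List.getLastD_concat]⟩, by rw [List.dropLast_concat]⟩
    have hxs : x ≤ t.sum := mem_le_sum hx
    by_contra hcon
    push_neg at hcon
    have hxe : x = t.sum := by omega
    have heq := eq_singleton_of_sum_mem ht' hx hxe
    exact hne (by rw [heq, hxe, htsum])

lemma I1 (m : ℕ) (hm : 1 ≤ m) : b (2*m+1) = b (2*m) + 1 := by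
  have himg := imgOdd m hm
  have h1 : (S (2*m)).ncard = (S (2*m+1) \ {[m, m+1]}).ncard := by
    rw [← himg]
    exact (Set.ncard_image_of_injOn (incL_injOn (by omega))).symm
  have hmem : [m, m+1] ∈ S (2*m+1) := by
    have h : [m] ++ [m+1] ∈ S (2*m+1) := by
      refine concat_mem_S.mpr ⟨?_, by simp, by omega, by simp, by simp; omega⟩
      simp only [List.sum_cons, List.sum_nil, Nat.add_zero]
      exact singleton_mem_S (by omega)
    simpa using h
  have h2 := Set.ncard_diff_singleton_add_one hmem (S_finite _)
  rw [b_def, b_def]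
  omega

lemma I2 (m : ℕ) : b (2*m+2) + 1 = b (2*m+1) + b (m+1) := by
  set A := {l ∈ S (2*m+2) | m + 2 ≤ l.getLastD 0} with hA
  set B := {l ∈ S (2*m+2) | l.getLastD 0 = m+1} with hB
  have hAsub : A ⊆ S (2*m+2) := fun l hl => hl.1
  have hBsub : B ⊆ S (2*m+2) := fun l hl => hl.1
  have hunion : S (2*m+2) = A ∪ B := by
    ext l
    constructor
    · intro hl
      have := last_two_le hl (by omega)
      rcases Nat.lt_or_ge (l.getLastD 0) (m+2) with h | h
      · right; exact ⟨hl, by omega⟩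
      · left; exact ⟨hl, h⟩
    · rintro (h | h) <;> exact h.1
  have hdis : Disjoint A B := by
    rw [Set.disjoint_left]
    rintro l ⟨-, h1⟩ ⟨-, h2⟩
    omega
  have hAcard : A.ncard = b (2*m+1) := by
    rw [hA, ← imgA m, Set.ncard_image_of_injOn (incL_injOn (by omega)), b_def]
  have hBinj : Set.InjOn List.dropLast B := by
    rintro l1 ⟨h1, hl1⟩ l2 ⟨h2, hl2⟩ e
    obtain ⟨t1, a1, rfl⟩ := exists_concat_of_mem_S h1 (by omega)
    obtain ⟨t2, a2, rfl⟩ := exists_concat_of_mem_S h2 (by omega)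
    rw [List.getLastD_concat] at hl1 hl2
    rw [List.dropLast_concat, List.dropLast_concat] at e
    rw [e, hl1, hl2]
  have hBcard : B.ncard + 1 = b (m+1) := by
    rw [← Set.ncard_image_of_injOn hBinj, hB, imgB m, b_def]
    exact Set.ncard_diff_singleton_add_one (singleton_mem_S (by omega)) (S_finite _)
  have hcard : b (2*m+2) = A.ncard + B.ncard := by
    rw [b_def, hunion]
    exact Set.ncard_union_eq hdis ((S_finite _).subset hAsub) ((S_finite _).subset hBsub)
  omega

lemma b_zero : b 0 = 1 := by rw [b_def, S_zero, Set.ncard_singleton]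

lemma S_one : S 1 = {[1]} := by
  ext l
  constructor
  · intro hl
    obtain ⟨t, a, rfl⟩ := exists_concat_of_mem_S hl (by omega)
    obtain ⟨ht, hlt, ha, hsle, hsum⟩ := concat_mem_S.mp hl
    have ha1 : a = 1 := by omega
    have hts : t.sum = 0 := by omega
    have ht0 : t ∈ S 0 := by rwa [hts] at ht
    have : t = [] := by
      have := S_zero ▸ ht0
      simpa using this
    subst this
    simp [ha1]
  · rintro rfl
    exact singleton_mem_S (by omega)

lemma b_one : b 1 = 1 := by rw [b_def, S_one, Set.ncard_singleton]

lemma J (k : ℕ) (hk : 1 ≤ k) : b (2*k+2) = b (2*k) + b (k+1) := by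
  have h1 := I1 k hk
  have h2 := I2 k
  omega

lemma b_two : b 2 = 1 := by
  have h := I2 0
  simp only [Nat.mul_zero, Nat.zero_add] at h
  rw [b_one] at h
  omega

lemma dd (k : ℕ) (hk : 1 ≤ k) : b (4*k+2) = b (4*k) + b (2*k) + 1 := by
  have hJ := J (2*k) (by omega)
  have hI := I1 k hk
  rw [(by ring : 2*(2*k)+2 = 4*k+2), (by ring : 2*(2*k) = 4*k)] at hJ
  omega

lemma d4 (k : ℕ) (hk : 1 ≤ k) : b (4*k+4) = b (4*k) + b (2*k) + 1 + b (2*k+2) := by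
  have hJ := J (2*k+1) (by omega)
  have hdd := dd k hk
  rw [(by ring : 2*(2*k+1)+2 = 4*k+4), (by ring : 2*(2*k+1) = 4*k+2),
    (by ring : 2*k+1+1 = 2*k+2)] at hJ
  omega

lemma b_three : b 3 = 2 := by
  have h := I1 1 (le_refl 1)
  norm_num at h
  rw [b_two] at h
  omega

lemma b_four : b 4 = 2 := by
  have h := J 1 (le_refl 1)
  norm_num at h
  rw [b_two] at h
  omega

lemma b_six : b 6 = 4 := by
  have h := J 2 (by omega)
  norm_num at h
  rw [b_four, b_three] at h
  omega

lemma b_eight : b 8 = 6 := by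
  have h := J 3 (by omega)
  norm_num at h
  rw [b_six, b_four] at h
  omega

lemma E : ∀ k, 1 ≤ k → b (8*k) % 2 = b (4*k) % 2 := by
  intro k hk
  induction k, hk using Nat.le_induction with
  | base =>
    norm_num [b_eight, b_four]
  | succ k hk ih =>
    have h1 := d4 (2*k) (by omega)
    have h2 := d4 (2*k+1) (by omega)
    rw [(by ring : 4*(2*k)+4 = 8*k+4), (by ring : 2*(2*k)+2 = 4*k+2),
      (by ring : 4*(2*k) = 8*k), (by ring : 2*(2*k) = 4*k)] at h1
    rw [(by ring : 4*(2*k+1)+4 = 8*k+8), (by ring : 2*(2*k+1)+2 = 4*k+4),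
      (by ring : 4*(2*k+1) = 8*k+4), (by ring : 2*(2*k+1) = 4*k+2)] at h2
    rw [(by ring : 8*(k+1) = 8*k+8), (by ring : 4*(k+1) = 4*k+4)]
    omega

end NSqAux

theorem stmt_8 (m : ℕ) : Odd (b (8 * m + 2)) ∧ Even (b (8 * m + 6)) := by
  rcases Nat.eq_zero_or_pos m with rfl | hm
  · constructor
    · rw [(by norm_num : 8*0+2 = 2), NSqAux.b_two]
      decide
    · rw [(by norm_num : 8*0+6 = 6), NSqAux.b_six]
      decide
  · have h1 := NSqAux.dd (2*m) (by omega)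
    have h2 := NSqAux.dd (2*m+1) (by omega)
    have h3 := NSqAux.d4 (2*m) (by omega)
    have hE := NSqAux.E m (by omega)
    rw [(by ring : 4*(2*m)+2 = 8*m+2), (by ring : 4*(2*m) = 8*m),
      (by ring : 2*(2*m) = 4*m)] at h1
    rw [(by ring : 4*(2*m+1)+2 = 8*m+6), (by ring : 4*(2*m+1) = 8*m+4),
      (by ring : 2*(2*m+1) = 4*m+2)] at h2
    rw [(by ring : 4*(2*m)+4 = 8*m+4), (by ring : 2*(2*m)+2 = 4*m+2),
      (by ring : 4*(2*m) = 8*m), (by ring : 2*(2*m) = 4*m)] at h3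
    rw [Nat.odd_iff, Nat.even_iff]
    omega
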